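/- Let f be a free measure-preserving action of ℕ₀^d on an atomless standard probability space (X,𝒳,μ), let n ∈ ℕ^d, and let Y ∈ 𝒳. Then there exists N ∈ ℕ₀^d and a measurable set B ⊆ f_N⁻¹(Y) that is n-admissible (i.e., the sets f_k⁻¹(B) for 0 ≤ k < n coordinatewise are pairwise disjoint) and satisfies μ(B) ≥ μ(Y) / 5^{C(π(n),2)}, where π(n) = n(1)⋯n(d) and C(m,2) = m(m−1)/2. -/

import Mathlib

open MeasureTheory Filter Function Topology

private lemma count_lemma {P : Type*} [Fintype P] [DecidableEq P] {a b : P} (hab : a ≠ b) :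
    Fintype.card (P → Bool) ≤
      4 * Fintype.card {g : P → Bool // g a = false ∧ g b = true} := by
  have h1 : ∀ g : P → Bool,
      (update (update g a false) b true) a = false ∧
        (update (update g a false) b true) b = true := by
    intro g
    constructor
    · rw [update_of_ne hab, update_self]
    · rw [update_self]
  classical
  let Φ : (P → Bool) → ({g : P → Bool // g a = false ∧ g b = true} × Bool × Bool) :=
    fun g => (⟨update (update g a false) b true, h1 g⟩, g a, g b)
  have hinj : Function.Injective Φ := by
    intro g g' h
    have h2 : update (update g a false) b true = update (update g' a false) b true :=
      congrArg Subtype.val (congrArg Prod.fst h)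
    have h3 := congrArg (fun z : {g : P → Bool // g a = false ∧ g b = true} × Bool × Bool
      => z.2.1) h
    have h4 := congrArg (fun z : {g : P → Bool // g a = false ∧ g b = true} × Bool × Bool
      => z.2.2) h
    simp only [Φ] at h3 h4
    funext p
    by_cases hpa : p = a
    · subst hpa; exact h3
    by_cases hpb : p = b
    · subst hpb; exact h4
    · have := congrArg (fun z : P → Bool => z p) h2
      simpa [update_of_ne hpa, update_of_ne hpb] using this
  calc Fintype.card (P → Bool) ≤
      Fintype.card ({g : P → Bool // g a = false ∧ g b = true} × Bool × Bool) :=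
        Fintype.card_le_of_injective Φ hinj
    _ = 4 * Fintype.card {g : P → Bool // g a = false ∧ g b = true} := by
        simp [Fintype.card_prod]; ring

/-- The key one-pair disjointification step. -/
private lemma step_lemma {X : Type*} [MeasurableSpace X] [StandardBorelSpace X]
    (μ : Measure X) [IsFiniteMeasure μ]
    (φ ψ : X → X) (hφ : Measurable φ) (hψ : Measurable ψ)
    (hcomm : ∀ x, φ (ψ x) = ψ (φ x))
    (hfree : μ {x | φ x = ψ x} = 0)
    (B : Set X) (hB : MeasurableSet B) :
    ∃ B', MeasurableSet B' ∧ B' ⊆ B ∧ φ ⁻¹' B' ∩ ψ ⁻¹' B' = ∅ ∧ μ B ≤ 5 * μ B' := by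
  classical
  rcases eq_or_ne (μ B) 0 with h0 | h0
  · exact ⟨∅, MeasurableSet.empty, Set.empty_subset _, by simp, by simp [h0]⟩
  obtain ⟨e, he⟩ := exists_measurableEmbedding_real X
  obtain ⟨q, hq⟩ := exists_surjective_nat ℚ
  set A : ℕ → Set X := fun i => {x | e x < (q i : ℝ)} with hA_def
  have hA : ∀ i, MeasurableSet (A i) := fun i => he.measurable measurableSet_Iio
  set C : ℕ → Set X := fun s => B ∩ {x | ∀ i < s, (φ x ∈ A i ↔ ψ x ∈ A i)} with hC_def
  have hiffset : ∀ i : ℕ, {x | (φ x ∈ A i ↔ ψ x ∈ A i)} =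
      (φ ⁻¹' A i ∩ ψ ⁻¹' A i) ∪ ((φ ⁻¹' A i)ᶜ ∩ (ψ ⁻¹' A i)ᶜ) := by
    intro i
    ext x
    by_cases h1 : φ x ∈ A i <;> by_cases h2 : ψ x ∈ A i <;>
      simp [h1, h2]
  have hCmeas : ∀ s, MeasurableSet (C s) := by
    intro s
    apply hB.inter
    have : {x | ∀ i < s, (φ x ∈ A i ↔ ψ x ∈ A i)} =
        ⋂ i, ⋂ (_ : i < s), {x | (φ x ∈ A i ↔ ψ x ∈ A i)} := by
      ext x; simp
    rw [this]
    refine MeasurableSet.iInter fun i => MeasurableSet.iInter fun _ => ?_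
    rw [hiffset i]
    exact ((hφ (hA i)).inter (hψ (hA i))).union
      (((hφ (hA i)).compl).inter ((hψ (hA i)).compl))
  have hanti : Antitone C := by
    intro s t hst x hx
    exact ⟨hx.1, fun i hi => hx.2 i (lt_of_lt_of_le hi hst)⟩
  have hsub : (⋂ s, C s) ⊆ {x | φ x = ψ x} := by
    intro x hx
    simp only [Set.mem_iInter] at hx
    have hbits : ∀ i : ℕ, (φ x ∈ A i ↔ ψ x ∈ A i) := by
      intro i
      exact (hx (i + 1)).2 i (Nat.lt_succ_self i)
    have : e (φ x) = e (ψ x) := by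
      by_contra hne
      rcases lt_or_gt_of_ne hne with hlt | hlt
      · obtain ⟨r, hr1, hr2⟩ := exists_rat_btwn hlt
        obtain ⟨i, rfl⟩ := hq r
        have h1 : φ x ∈ A i := hr1
        have h2 : ψ x ∈ A i := (hbits i).1 h1
        exact absurd h2 (not_lt.2 hr2.le)
      · obtain ⟨r, hr1, hr2⟩ := exists_rat_btwn hlt
        obtain ⟨i, rfl⟩ := hq r
        have h1 : ψ x ∈ A i := hr1
        have h2 : φ x ∈ A i := (hbits i).2 h1
        exact absurd h2 (not_lt.2 hr2.le)
    exact he.injective this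
  have hz : μ (⋂ s, C s) = 0 :=
    le_antisymm (le_trans (measure_mono hsub) hfree.le) zero_le
  have htend : Tendsto (fun s => μ (C s)) atTop (𝓝 0) := by
    have := tendsto_measure_iInter_atTop (μ := μ)
      (fun s => (hCmeas s).nullMeasurableSet) hanti ⟨0, measure_ne_top μ _⟩
    rwa [hz] at this
  have h5pos : (0 : ENNReal) < μ B / 5 := ENNReal.div_pos h0 (by norm_num)
  obtain ⟨s, hs⟩ : ∃ s, μ (C s) < μ B / 5 := (htend.eventually_lt_const h5pos).exists
  -- the pattern map
  set P := (Fin s → Bool) with hP_def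
  set wb : X → P := fun x i => if x ∈ A (i : ℕ) then true else false with hwb_def
  have hwb : Measurable wb := by
    apply measurable_pi_lambda
    intro i
    exact Measurable.ite (hA (i : ℕ)) measurable_const measurable_const
  have hPsing : ∀ p : P, MeasurableSet ({p} : Set P) := fun p =>
    MeasurableSet.singleton p
  have hPall : ∀ S : Set P, MeasurableSet S := by
    intro S
    have : S = ⋃ p ∈ S, {p} := by simp
    rw [this]
    exact MeasurableSet.biUnion (Set.to_countable S) fun p _ => hPsing p
  have hgmeas : ∀ g : P → Bool, Measurable g := fun g S _ => hPall _
  -- the candidate sets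
  set Bg : (P → Bool) → Set X := fun g =>
    B ∩ {x | g (wb (φ x)) = false} ∩ {x | g (wb (ψ x)) = true} with hBg_def
  have hBgmeas : ∀ g, MeasurableSet (Bg g) := by
    intro g
    refine (hB.inter ?_).inter ?_
    · exact ((hgmeas g).comp (hwb.comp hφ)) (MeasurableSet.singleton false)
    · exact ((hgmeas g).comp (hwb.comp hψ)) (MeasurableSet.singleton true)
  have hBgsub : ∀ g, Bg g ⊆ B := fun g =>
    (Set.inter_subset_left.trans Set.inter_subset_left)
  have hBgdisj : ∀ g, φ ⁻¹' (Bg g) ∩ ψ ⁻¹' (Bg g) = ∅ := by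
    intro g
    ext z
    simp only [Set.mem_inter_iff, Set.mem_preimage, Set.mem_empty_iff_false, iff_false,
      not_and]
    intro hz1 hz2
    have h1 : g (wb (ψ (φ z))) = true := hz1.2
    have h2 : g (wb (φ (ψ z))) = false := hz2.1.2
    rw [hcomm z] at h2
    rw [h1] at h2
    exact Bool.noConfusion h2
  -- membership in C s is pattern equality
  have hkey : ∀ x, x ∈ C s ↔ (x ∈ B ∧ wb (φ x) = wb (ψ x)) := by
    intro x
    constructor
    · rintro ⟨hxB, hxp⟩
      refine ⟨hxB, funext fun i => ?_⟩
      have := hxp (i : ℕ) i.isLt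
      by_cases h1 : φ x ∈ A (i : ℕ)
      · simp [hwb_def, h1, this.1 h1]
      · have h2 : ψ x ∈ A (i : ℕ) → False := fun h => h1 (this.2 h)
        simp only [hwb_def]
        rw [if_neg h1, if_neg h2]
    · rintro ⟨hxB, hxp⟩
      refine ⟨hxB, fun i hi => ?_⟩
      have := congrArg (fun z : P => z ⟨i, hi⟩) hxp
      simp only [hwb_def] at this
      by_cases h1 : φ x ∈ A i <;> by_cases h2 : ψ x ∈ A i <;>
        simp_all [h1, h2]
  set D : Set X := B \ C s with hD_def
  have hDmeas : MeasurableSet D := hB.diff (hCmeas s)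
  -- counting: for x ∈ D many g work
  have hcount : ∀ x ∈ D,
      (Fintype.card (P → Bool) : ENNReal) ≤
        4 * ((Finset.univ.filter (fun g : P → Bool => x ∈ Bg g)).card : ENNReal) := by
    intro x hx
    have hxB : x ∈ B := hx.1
    have hxne : wb (φ x) ≠ wb (ψ x) := by
      intro h
      exact hx.2 ((hkey x).2 ⟨hxB, h⟩)
    have hcl := count_lemma hxne
    have hfilter : (Finset.univ.filter (fun g : P → Bool => x ∈ Bg g)) =
        (Finset.univ.filter (fun g : P → Bool =>
          g (wb (φ x)) = false ∧ g (wb (ψ x)) = true)) := by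
      apply Finset.filter_congr
      intro g _
      simp [hBg_def, hxB]
    rw [hfilter]
    have hcard : Fintype.card {g : P → Bool // g (wb (φ x)) = false ∧ g (wb (ψ x)) = true} =
        (Finset.univ.filter (fun g : P → Bool =>
          g (wb (φ x)) = false ∧ g (wb (ψ x)) = true)).card := Fintype.card_subtype _
    rw [hcard] at hcl
    exact_mod_cast hcl
  -- sum of measures
  have hsum : (Fintype.card (P → Bool) : ENNReal) * μ D ≤
      4 * ∑ g : P → Bool, μ (Bg g) := by
    have hμeq : ∀ g : P → Bool, μ (Bg g) =
        ∫⁻ x, (Bg g).indicator (1 : X → ENNReal) x ∂μ := by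
      intro g
      rw [lintegral_indicator_one (hBgmeas g)]
    have hsum_int : ∑ g : P → Bool, μ (Bg g) =
        ∫⁻ x, ∑ g : P → Bool, (Bg g).indicator (1 : X → ENNReal) x ∂μ := by
      rw [lintegral_finset_sum]
      · exact Finset.sum_congr rfl fun g _ => hμeq g
      · exact fun g _ => (measurable_const.indicator (hBgmeas g))
    have hpoint : ∀ x, D.indicator (fun _ => (Fintype.card (P → Bool) : ENNReal)) x ≤
        4 * ∑ g : P → Bool, (Bg g).indicator (1 : X → ENNReal) x := by
      intro x
      by_cases hx : x ∈ D
      · rw [Set.indicator_of_mem hx]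
        have : ∑ g : P → Bool, (Bg g).indicator (1 : X → ENNReal) x =
            ((Finset.univ.filter (fun g : P → Bool => x ∈ Bg g)).card : ENNReal) := by
          rw [Finset.card_filter]
          push_cast
          refine Finset.sum_congr rfl fun g _ => ?_
          by_cases hxg : x ∈ Bg g <;> simp [hxg]
        rw [this]
        exact hcount x hx
      · rw [Set.indicator_of_notMem hx]
        exact zero_le
    calc (Fintype.card (P → Bool) : ENNReal) * μ D
        = ∫⁻ x, D.indicator (fun _ => (Fintype.card (P → Bool) : ENNReal)) x ∂μ := by
          rw [lintegral_indicator hDmeas, setLIntegral_const]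
      _ ≤ ∫⁻ x, 4 * ∑ g : P → Bool, (Bg g).indicator (1 : X → ENNReal) x ∂μ :=
          lintegral_mono hpoint
      _ = 4 * ∑ g : P → Bool, μ (Bg g) := by
          rw [lintegral_const_mul]
          · rw [hsum_int]
          · exact Finset.measurable_sum _ fun g _ =>
              (measurable_const.indicator (hBgmeas g))
  -- pick the best g
  obtain ⟨g₀, -, hg₀⟩ := Finset.exists_max_image (Finset.univ : Finset (P → Bool))
    (fun g => μ (Bg g)) ⟨fun _ => true, Finset.mem_univ _⟩
  have hsum_le : ∑ g : P → Bool, μ (Bg g) ≤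
      (Fintype.card (P → Bool) : ENNReal) * μ (Bg g₀) := by
    have := Finset.sum_le_card_nsmul (Finset.univ : Finset (P → Bool))
      (fun g => μ (Bg g)) (μ (Bg g₀)) (fun g hg => hg₀ g hg)
    simpa [nsmul_eq_mul, Finset.card_univ] using this
  have hcard_ne : (Fintype.card (P → Bool) : ENNReal) ≠ 0 := by
    simp [Fintype.card_ne_zero]
  have hcard_fin : (Fintype.card (P → Bool) : ENNReal) ≠ ⊤ := by
    simp
  have hD4 : μ D ≤ 4 * μ (Bg g₀) := by
    have h1 : (Fintype.card (P → Bool) : ENNReal) * μ D ≤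
        (Fintype.card (P → Bool) : ENNReal) * (4 * μ (Bg g₀)) := by
      calc (Fintype.card (P → Bool) : ENNReal) * μ D
          ≤ 4 * ∑ g : P → Bool, μ (Bg g) := hsum
        _ ≤ 4 * ((Fintype.card (P → Bool) : ENNReal) * μ (Bg g₀)) := by
            exact mul_le_mul_right hsum_le 4
        _ = (Fintype.card (P → Bool) : ENNReal) * (4 * μ (Bg g₀)) := by ring
    exact (ENNReal.mul_le_mul_iff_right hcard_ne hcard_fin).1 h1
  -- conclude
  refine ⟨Bg g₀, hBgmeas g₀, hBgsub g₀, hBgdisj g₀, ?_⟩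
  have hBCD : μ B ≤ μ (C s) + μ D := by
    have : B ⊆ C s ∪ D := by
      intro x hx
      by_cases h : x ∈ C s
      · exact Or.inl h
      · exact Or.inr ⟨hx, h⟩
    exact (measure_mono this).trans (measure_union_le _ _)
  have hchain : μ B ≤ μ B / 5 + 4 * μ (Bg g₀) :=
    hBCD.trans (add_le_add hs.le hD4)
  -- now do the ENNReal arithmetic
  have h5ne : (5 : ENNReal) ≠ 0 := by norm_num
  have h5top : (5 : ENNReal) ≠ ⊤ := by norm_num
  have hμBtop : μ B ≠ ⊤ := measure_ne_top μ B
  have h2 : 5 * μ B ≤ 5 * (μ B / 5 + 4 * μ (Bg g₀)) := mul_le_mul_right hchain 5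
  rw [mul_add, ENNReal.mul_div_cancel h5ne h5top] at h2
  have h3 : μ B + 4 * μ B ≤ μ B + 5 * (4 * μ (Bg g₀)) := by
    calc μ B + 4 * μ B = 5 * μ B := by ring
      _ ≤ μ B + 5 * (4 * μ (Bg g₀)) := h2
  have h4 : 4 * μ B ≤ 5 * (4 * μ (Bg g₀)) :=
    (ENNReal.add_le_add_iff_left hμBtop).1 h3
  have h5 : 4 * μ B ≤ 4 * (5 * μ (Bg g₀)) := by
    calc 4 * μ B ≤ 5 * (4 * μ (Bg g₀)) := h4
      _ = 4 * (5 * μ (Bg g₀)) := by ring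
  exact (ENNReal.mul_le_mul_iff_right (by norm_num) (by norm_num)).1 h5

theorem stmt_2 {X : Type*} [MeasurableSpace X] [StandardBorelSpace X]
    (μ : Measure X) [IsProbabilityMeasure μ] [NullSingletonClass μ]
    {d : ℕ} (f : (Fin d → ℕ) → X → X)
    (hmp : ∀ n, MeasurePreserving (f n) μ μ)
    (h0 : f 0 = id)
    (hadd : ∀ m n, f (m + n) = f m ∘ f n)
    (hfree : ∀ k l : Fin d → ℕ, k ≠ l → μ {x | f k x = f l x} = 0)
    (n : Fin d → ℕ) (hn : ∀ j, 0 < n j)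
    (Y : Set X) (hY : MeasurableSet Y) :
    ∃ N : Fin d → ℕ, ∃ B : Set X, MeasurableSet B ∧ B ⊆ f N ⁻¹' Y ∧
      (∀ k l : Fin d → ℕ, (∀ j, k j < n j) → (∀ j, l j < n j) → k ≠ l →
        f k ⁻¹' B ∩ f l ⁻¹' B = ∅) ∧
      μ Y / 5 ^ Nat.choose (∏ j, n j) 2 ≤ μ B := by
  classical
  have hcomm : ∀ (k l : Fin d → ℕ) (x : X), f k (f l x) = f l (f k x) := by
    intro k l x
    have h1 : f (k + l) x = f k (f l x) := congrFun (hadd k l) x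
    have h2 : f (l + k) x = f l (f k x) := congrFun (hadd l k) x
    rw [← h1, ← h2, add_comm]
  -- inner lemma: handle all pairs (a, x) for x in S
  have inner : ∀ (a : Fin d → ℕ) (S : Finset (Fin d → ℕ)) (B : Set X),
      MeasurableSet B →
      ∃ B', MeasurableSet B' ∧ B' ⊆ B ∧
        (∀ x ∈ S, x ≠ a → f a ⁻¹' B' ∩ f x ⁻¹' B' = ∅) ∧
        μ B ≤ 5 ^ S.card * μ B' := by
    intro a S
    induction S using Finset.induction_on with
    | empty =>
        intro B hB
        exact ⟨B, hB, subset_rfl, by simp, by simp⟩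
    | @insert x S hx IH =>
        intro B hB
        obtain ⟨B₁, hB₁meas, hB₁sub, hB₁disj, hB₁bound⟩ := IH B hB
        rw [Finset.card_insert_of_notMem hx]
        by_cases hxa : x = a
        · refine ⟨B₁, hB₁meas, hB₁sub, ?_, ?_⟩
          · intro y hy hya
            rcases Finset.mem_insert.1 hy with rfl | hyS
            · exact absurd hxa hya
            · exact hB₁disj y hyS hya
          · calc μ B ≤ 5 ^ S.card * μ B₁ := hB₁bound
              _ ≤ 5 ^ (S.card + 1) * μ B₁ := by
                  gcongr
                  · exact le_trans (by norm_num) (le_refl _)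
                  · omega
        · obtain ⟨B₂, hB₂meas, hB₂sub, hB₂disj, hB₂bound⟩ :=
            step_lemma μ (f a) (f x) (hmp a).measurable (hmp x).measurable
              (hcomm a x) (hfree a x (fun h => hxa h.symm)) B₁ hB₁meas
          refine ⟨B₂, hB₂meas, hB₂sub.trans hB₁sub, ?_, ?_⟩
          · intro y hy hya
            rcases Finset.mem_insert.1 hy with rfl | hyS
            · exact hB₂disj
            · have h := hB₁disj y hyS hya
              apply Set.eq_empty_of_subset_empty
              rw [← h]
              exact Set.inter_subset_inter (Set.preimage_mono hB₂sub)
                (Set.preimage_mono hB₂sub)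
          · calc μ B ≤ 5 ^ S.card * μ B₁ := hB₁bound
              _ ≤ 5 ^ S.card * (5 * μ B₂) := mul_le_mul_right hB₂bound _
              _ = 5 ^ (S.card + 1) * μ B₂ := by rw [pow_succ]; ring
  -- outer lemma
  have outer : ∀ S : Finset (Fin d → ℕ),
      ∃ B', MeasurableSet B' ∧ B' ⊆ Y ∧
        (∀ k ∈ S, ∀ l ∈ S, k ≠ l → f k ⁻¹' B' ∩ f l ⁻¹' B' = ∅) ∧
        μ Y ≤ 5 ^ (Nat.choose S.card 2) * μ B' := by
    intro S
    induction S using Finset.induction_on with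
    | empty => exact ⟨Y, hY, subset_rfl, by simp, by simp⟩
    | @insert a S ha IH =>
        obtain ⟨B₁, hB₁meas, hB₁sub, hB₁disj, hB₁bound⟩ := IH
        obtain ⟨B₂, hB₂meas, hB₂sub, hB₂disj, hB₂bound⟩ := inner a S B₁ hB₁meas
        refine ⟨B₂, hB₂meas, hB₂sub.trans hB₁sub, ?_, ?_⟩
        · intro k hk l hl hkl
          rcases Finset.mem_insert.1 hk with rfl | hkS
          · rcases Finset.mem_insert.1 hl with rfl | hlS
            · exact absurd rfl hkl
            · have hla : l ≠ k := fun h => ha (h ▸ hlS)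
              exact hB₂disj l hlS hla
          · rcases Finset.mem_insert.1 hl with rfl | hlS
            · have hka : k ≠ l := fun h => ha (h ▸ hkS)
              rw [Set.inter_comm]
              exact hB₂disj k hkS hka
            · have h := hB₁disj k hkS l hlS hkl
              apply Set.eq_empty_of_subset_empty
              rw [← h]
              exact Set.inter_subset_inter (Set.preimage_mono hB₂sub)
                (Set.preimage_mono hB₂sub)
        · rw [Finset.card_insert_of_notMem ha]
          have hch : Nat.choose (S.card + 1) 2 = Nat.choose S.card 2 + S.card := by
            rw [Nat.choose_succ_succ, Nat.choose_one_right, Nat.add_comm]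
          calc μ Y ≤ 5 ^ (Nat.choose S.card 2) * μ B₁ := hB₁bound
            _ ≤ 5 ^ (Nat.choose S.card 2) * (5 ^ S.card * μ B₂) :=
                mul_le_mul_right hB₂bound _
            _ = 5 ^ (Nat.choose S.card 2 + S.card) * μ B₂ := by
                rw [pow_add]; ring
            _ = 5 ^ (Nat.choose (S.card + 1) 2) * μ B₂ := by rw [hch]
  -- apply to the box
  set box : Finset (Fin d → ℕ) := Fintype.piFinset (fun j => Finset.range (n j)) with hbox
  obtain ⟨B, hBmeas, hBsub, hBdisj, hBbound⟩ := outer box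
  refine ⟨0, B, hBmeas, ?_, ?_, ?_⟩
  · rw [h0]; simpa using hBsub
  · intro k l hk hl hkl
    apply hBdisj
    · simp only [hbox, Fintype.mem_piFinset]
      intro j; exact Finset.mem_range.2 (hk j)
    · simp only [hbox, Fintype.mem_piFinset]
      intro j; exact Finset.mem_range.2 (hl j)
    · exact hkl
  · have hcard : box.card = ∏ j, n j := by
      simp [hbox, Fintype.card_piFinset]
    rw [← hcard]
    exact ENNReal.div_le_of_le_mul (by rwa [mul_comm] at hBbound)
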